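/- Let U in SpSt(2n,2k) and Δ a tangent vector at U (U^+Δ = -Δ^+U). Set A = U^+Δ, H = Δ - UA, and suppose (1/4)H^+H - (1/2)A + I_{2k} is invertible. Then the Cayley retraction R_U(Δ) := -U + (H + 2U)((1/4)H^+H - (1/2)A + I_{2k})^{-1} satisfies R_U(Δ)^+ R_U(Δ) = I_{2k}, i.e., R_U(Δ) lies in SpSt(2n,2k). -/
import Mathlib
open Matrix
noncomputable section

/-- The standard symplectic matrix `J = [[0, I],[-I, 0]]` of size `2m`. -/
def Jmat (m : ℕ) : Matrix (Fin m ⊕ Fin m) (Fin m ⊕ Fin m) ℝ :=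
  Matrix.fromBlocks 0 1 (-1) 0

/-- The symplectic inverse `A⁺ = J₂ₖᵀ Aᵀ J₂ₙ` of a `2n × 2k` real matrix. -/
def sympInv {n k : ℕ} (A : Matrix (Fin n ⊕ Fin n) (Fin k ⊕ Fin k) ℝ) :
    Matrix (Fin k ⊕ Fin k) (Fin n ⊕ Fin n) ℝ :=
  (Jmat k)ᵀ * Aᵀ * Jmat n

lemma J_mul_Jt (m : ℕ) : Jmat m * (Jmat m)ᵀ = 1 := by
  simp [Jmat, Matrix.fromBlocks_transpose, Matrix.fromBlocks_multiply, ← Matrix.fromBlocks_one]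

lemma Jt_mul_J (m : ℕ) : (Jmat m)ᵀ * Jmat m = 1 := by
  simp [Jmat, Matrix.fromBlocks_transpose, Matrix.fromBlocks_multiply, ← Matrix.fromBlocks_one]

lemma J_mul_J (m : ℕ) : Jmat m * Jmat m = -1 := by
  simp only [Jmat, Matrix.fromBlocks_multiply]
  rw [← Matrix.fromBlocks_one, Matrix.fromBlocks_neg]
  simp

lemma Jt_mul_Jt (m : ℕ) : (Jmat m)ᵀ * (Jmat m)ᵀ = -1 := by
  rw [← Matrix.transpose_mul, J_mul_J]; simp

lemma sympInv_mul {n m k : ℕ} (A : Matrix (Fin n ⊕ Fin n) (Fin m ⊕ Fin m) ℝ)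
    (B : Matrix (Fin m ⊕ Fin m) (Fin k ⊕ Fin k) ℝ) :
    sympInv (A * B) = sympInv B * sympInv A := by
  unfold sympInv
  have h : Jmat m * ((Jmat m)ᵀ * (Aᵀ * Jmat n)) = Aᵀ * Jmat n := by
    rw [← Matrix.mul_assoc, J_mul_Jt, Matrix.one_mul]
  rw [Matrix.transpose_mul]
  simp only [Matrix.mul_assoc, h]

lemma sympInv_sympInv {n k : ℕ} (A : Matrix (Fin n ⊕ Fin n) (Fin k ⊕ Fin k) ℝ) :
    sympInv (sympInv A) = A := by
  unfold sympInv
  simp only [Matrix.transpose_mul, Matrix.transpose_transpose]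
  simp only [Matrix.mul_assoc]
  rw [J_mul_J, ← Matrix.mul_assoc ((Jmat n)ᵀ), Jt_mul_Jt]
  simp

lemma sympInv_one {k : ℕ} : sympInv (1 : Matrix (Fin k ⊕ Fin k) (Fin k ⊕ Fin k) ℝ) = 1 := by
  simp [sympInv, Jt_mul_J]

lemma sympInv_zero {n k : ℕ} : sympInv (0 : Matrix (Fin n ⊕ Fin n) (Fin k ⊕ Fin k) ℝ) = 0 := by
  simp [sympInv]

lemma sympInv_add {n k : ℕ} (A B : Matrix (Fin n ⊕ Fin n) (Fin k ⊕ Fin k) ℝ) :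
    sympInv (A + B) = sympInv A + sympInv B := by
  simp [sympInv, Matrix.transpose_add, Matrix.add_mul, Matrix.mul_add]

lemma sympInv_neg {n k : ℕ} (A : Matrix (Fin n ⊕ Fin n) (Fin k ⊕ Fin k) ℝ) :
    sympInv (-A) = -sympInv A := by
  simp [sympInv]

lemma sympInv_sub {n k : ℕ} (A B : Matrix (Fin n ⊕ Fin n) (Fin k ⊕ Fin k) ℝ) :
    sympInv (A - B) = sympInv A - sympInv B := by
  simp [sub_eq_add_neg, sympInv_add, sympInv_neg]

lemma sympInv_smul {n k : ℕ} (c : ℝ) (A : Matrix (Fin n ⊕ Fin n) (Fin k ⊕ Fin k) ℝ) :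
    sympInv (c • A) = c • sympInv A := by
  simp [sympInv, Matrix.transpose_smul, Matrix.smul_mul, Matrix.mul_smul]

lemma sympInv_nsmul {n k : ℕ} (c : ℕ) (A : Matrix (Fin n ⊕ Fin n) (Fin k ⊕ Fin k) ℝ) :
    sympInv (c • A) = c • sympInv A := by
  simp [sympInv, Matrix.smul_mul, Matrix.mul_smul]

theorem stmt_11 (n k : ℕ) (U Δ : Matrix (Fin n ⊕ Fin n) (Fin k ⊕ Fin k) ℝ)
    (hU : sympInv U * U = 1) (hΔ : sympInv U * Δ = -(sympInv Δ * U))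
    (A : Matrix (Fin k ⊕ Fin k) (Fin k ⊕ Fin k) ℝ) (hA : A = sympInv U * Δ)
    (H : Matrix (Fin n ⊕ Fin n) (Fin k ⊕ Fin k) ℝ) (hH : H = Δ - U * A)
    (hInv : IsUnit ((1/4 : ℝ) • (sympInv H * H) - (1/2 : ℝ) • A + 1)) :
    sympInv (-U + (H + 2 • U) * ((1/4 : ℝ) • (sympInv H * H) - (1/2 : ℝ) • A + 1)⁻¹)
      * (-U + (H + 2 • U) * ((1/4 : ℝ) • (sympInv H * H) - (1/2 : ℝ) • A + 1)⁻¹) = 1 := by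
  set S : Matrix (Fin k ⊕ Fin k) (Fin k ⊕ Fin k) ℝ :=
    (1/4 : ℝ) • (sympInv H * H) - (1/2 : ℝ) • A + 1 with hS
  have hAp : sympInv A = -A := by
    rw [hA, sympInv_mul, sympInv_sympInv, hΔ, neg_neg]
  have hUH : sympInv U * H = 0 := by
    rw [hH, Matrix.mul_sub, ← Matrix.mul_assoc, hU, ← hA, Matrix.one_mul, sub_self]
  have hHU : sympInv H * U = 0 := by
    have : sympInv H * U = sympInv (sympInv U * H) := by
      rw [sympInv_mul, sympInv_sympInv]
    rw [this, hUH, sympInv_zero]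
  have hM : sympInv (sympInv H * H) = sympInv H * H := by
    rw [sympInv_mul, sympInv_sympInv]
  have hT : sympInv S = (1/4 : ℝ) • (sympInv H * H) + (1/2 : ℝ) • A + 1 := by
    rw [hS, sympInv_add, sympInv_sub, sympInv_smul, sympInv_smul, sympInv_one, hM, hAp]
    rw [smul_neg, sub_neg_eq_add]
  have hdet : IsUnit S.det := (Matrix.isUnit_iff_isUnit_det S).mp hInv
  have hS1 : S * S⁻¹ = 1 := Matrix.mul_nonsing_inv S hdet
  have hS2 : S⁻¹ * S = 1 := Matrix.nonsing_inv_mul S hdet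
  have hQ1 : sympInv S * sympInv S⁻¹ = 1 := by
    rw [← sympInv_mul, hS2, sympInv_one]
  have hQ2 : sympInv S⁻¹ * sympInv S = 1 := by
    rw [← sympInv_mul, hS1, sympInv_one]
  have e1 : sympInv U * (H + 2 • U) = (2 : ℕ) • (1 : Matrix (Fin k ⊕ Fin k) (Fin k ⊕ Fin k) ℝ) := by
    rw [Matrix.mul_add, hUH, Matrix.mul_smul, hU, zero_add]
  have e2 : (sympInv H + (2 : ℕ) • sympInv U) * U = (2 : ℕ) • (1 : Matrix (Fin k ⊕ Fin k) (Fin k ⊕ Fin k) ℝ) := by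
    rw [Matrix.add_mul, hHU, Matrix.smul_mul, hU, zero_add]
  have key : (sympInv H + (2 : ℕ) • sympInv U) * (H + 2 • U) = (2 : ℕ) • (S + sympInv S) := by
    rw [hT, hS]
    simp only [Matrix.add_mul, Matrix.mul_add, Matrix.smul_mul, Matrix.mul_smul, hUH, hHU, hU]
    module
  rw [sympInv_add, sympInv_neg, sympInv_mul, sympInv_add, sympInv_nsmul]
  have expand : (-sympInv U + sympInv S⁻¹ * (sympInv H + 2 • sympInv U)) * (-U + (H + 2 • U) * S⁻¹)
      = sympInv U * U - (sympInv U * (H + 2 • U)) * S⁻¹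
        - sympInv S⁻¹ * ((sympInv H + (2 : ℕ) • sympInv U) * U)
        + sympInv S⁻¹ * ((sympInv H + (2 : ℕ) • sympInv U) * (H + 2 • U)) * S⁻¹ := by
    simp only [Matrix.add_mul, Matrix.mul_add, Matrix.neg_mul, Matrix.mul_neg, neg_neg,
      Matrix.mul_assoc]
    abel
  rw [expand, e1, e2, key, hU]
  have final : sympInv S⁻¹ * ((2 : ℕ) • (S + sympInv S)) * S⁻¹
      = (2 : ℕ) • S⁻¹ + (2 : ℕ) • sympInv S⁻¹ := by
    rw [Matrix.mul_smul, Matrix.smul_mul, Matrix.mul_add, Matrix.add_mul,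
      Matrix.mul_assoc (sympInv S⁻¹) S, hS1, Matrix.mul_one, hQ2, Matrix.one_mul]
    rw [smul_add, add_comm]
  rw [final, Matrix.smul_mul, Matrix.one_mul, Matrix.mul_smul, Matrix.mul_one]
  abel
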